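/- (CS decomposition, square case) Let n = p + q with p ≥ q. Any n×n real orthogonal matrix Q can be factored as Q = diag(O_p, O_q) · M · diag(O_p', O_q'), where O_p, O_p' ∈ O(p), O_q, O_q' ∈ O(q), and M is the block matrix [[C, 0, S], [0, I_{p−q}, 0], [−S, 0, C]] with C = diag(cos θ_l), S = diag(sin θ_l) for angles θ_1, …, θ_q ∈ [0, π/2]. -/

import Mathlib

open Matrix

lemma cs_col_ext {m n : Type*} [Fintype m] [DecidableEq m] [Fintype n] [DecidableEq n]
    (E : Matrix m n ℝ) (f : n → m) (hf : Function.Injective f) (d : n → ℝ)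
    (h : Eᵀ * E = Matrix.diagonal d) :
    ∃ U : Matrix m m ℝ, Uᵀ * U = 1 ∧
      E = U * Matrix.of (fun i j => if i = f j then Real.sqrt (d j) else 0) := by
  classical
  set colE : n → EuclideanSpace ℝ m := fun j => WithLp.toLp 2 (fun i => E i j) with hcol
  have hinner : ∀ j k : n, (inner (𝕜 := ℝ) (colE j) (colE k)) = Matrix.diagonal d j k := by
    intro j k
    rw [← h]
    simp only [PiLp.inner_apply, RCLike.inner_apply, starRingEnd_apply, star_trivial,
      Matrix.mul_apply, Matrix.transpose_apply, hcol]
    exact Finset.sum_congr rfl fun _ _ => mul_comm _ _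
  have hd0 : ∀ j, 0 ≤ d j := by
    intro j
    have h2 := hinner j j
    simp only [Matrix.diagonal_apply_eq] at h2
    rw [← h2]
    exact real_inner_self_nonneg (F := EuclideanSpace ℝ m) (x := colE j)
  set v : m → EuclideanSpace ℝ m :=
    Function.extend f (fun j => (Real.sqrt (d j))⁻¹ • colE j) 0 with hv
  have hvf : ∀ j : n, v (f j) = (Real.sqrt (d j))⁻¹ • colE j := fun j =>
    hf.extend_apply _ _ j
  set s : Set m := f '' {j | d j ≠ 0} with hs
  have hon : Orthonormal ℝ (s.restrict v) := by
    rw [orthonormal_iff_ite]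
    rintro ⟨i, hi⟩ ⟨i', hi'⟩
    simp only [Set.restrict_apply, Subtype.mk.injEq]
    obtain ⟨j, hj, rfl⟩ := hi
    obtain ⟨j', hj', rfl⟩ := hi'
    show inner ℝ (v (f j)) (v (f j')) = _
    rw [hvf, hvf]
    rw [real_inner_smul_left, real_inner_smul_right, hinner]
    by_cases hjj : j = j'
    · subst hjj
      simp only [Matrix.diagonal_apply_eq, Subtype.mk.injEq, if_pos rfl, ite_true]
      have hsq : Real.sqrt (d j) * Real.sqrt (d j) = d j :=
        Real.mul_self_sqrt (hd0 j)
      have hne : Real.sqrt (d j) ≠ 0 := by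
        simpa [Real.sqrt_eq_zero' ] using lt_of_le_of_ne (hd0 j) (Ne.symm hj)
      field_simp
      rw [sq, hsq]
    · have : f j ≠ f j' := fun hc => hjj (hf hc)
      rw [Matrix.diagonal_apply_ne _ hjj]
      simp [this, hjj]
  obtain ⟨b, hb⟩ := hon.exists_orthonormalBasis_extension_of_card_eq
    (finrank_euclideanSpace (𝕜 := ℝ) (ι := m))
  refine ⟨Matrix.of (fun i k => b k i), ?_, ?_⟩
  · ext k k'
    have := (orthonormal_iff_ite.mp b.orthonormal) k k'
    simp only [PiLp.inner_apply, RCLike.inner_apply, starRingEnd_apply, star_trivial] at this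
    simp only [Matrix.mul_apply, Matrix.transpose_apply, Matrix.of_apply]
    rw [show ∑ j, (b k) j * (b k') j = ∑ x, (b k') x * (b k) x from
      Finset.sum_congr rfl fun _ _ => mul_comm _ _, this]
    simp [Matrix.one_apply]
  · ext i j
    rw [Matrix.mul_apply]
    simp only [Matrix.of_apply, mul_ite, mul_zero]
    rw [Finset.sum_ite_eq' Finset.univ (f j) (fun k => b k i * Real.sqrt (d j))]
    simp only [Finset.mem_univ, if_pos]
    by_cases hdj : d j = 0
    · have h2 := hinner j j
      simp only [Matrix.diagonal_apply_eq, hdj] at h2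
      have : colE j = 0 := by
        rwa [inner_self_eq_zero (𝕜 := ℝ)] at h2
      have hEij : E i j = 0 := by simpa [hcol] using congrArg (fun x : EuclideanSpace ℝ m => x i) this
      simp [hdj, hEij]
    · have hfj : f j ∈ s := ⟨j, hdj, rfl⟩
      rw [hb _ hfj, hvf j]
      have hne : Real.sqrt (d j) ≠ 0 := by
        simpa [Real.sqrt_eq_zero'] using lt_of_le_of_ne (hd0 j) (Ne.symm hdj)
      show E i j = (Real.sqrt (d j))⁻¹ * E i j * Real.sqrt (d j)
      field_simp

lemma cs_sandwich {k : Type*} [Fintype k] [DecidableEq k] (U : Matrix k k ℝ) (X : Matrix k k ℝ)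
    (hU : Uᵀ * U = 1) : Uᵀ * (U * X * Uᵀ) * U = X := by
  calc Uᵀ * (U * X * Uᵀ) * U = (Uᵀ * U) * (X * (Uᵀ * U)) := by simp only [Matrix.mul_assoc]
  _ = X := by rw [hU, Matrix.mul_one, Matrix.one_mul]

lemma cs_svd {k : Type*} [Fintype k] [DecidableEq k] (D : Matrix k k ℝ)
    (hD : (1 - Dᵀ * D).PosSemidef) :
    ∃ (U V : Matrix k k ℝ) (c : k → ℝ), Uᵀ * U = 1 ∧ Vᵀ * V = 1 ∧
      (∀ j, c j ∈ Set.Icc (0:ℝ) 1) ∧ D = U * Matrix.diagonal c * Vᵀ := by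
  classical
  have hct : ∀ (M : Matrix k k ℝ), Mᴴ = Mᵀ := fun M =>
    Matrix.conjTranspose_eq_transpose_of_trivial M
  have hP : (Dᵀ * D).PosSemidef := by
    have := Matrix.posSemidef_conjTranspose_mul_self D
    rwa [hct] at this
  have hH : (Dᵀ * D).IsHermitian := hP.1
  set V : Matrix k k ℝ := (hH.eigenvectorUnitary : Matrix k k ℝ) with hVdef
  have hVmem := hH.eigenvectorUnitary.2
  rw [Unitary.mem_iff] at hVmem
  have hV1 : Vᵀ * V = 1 := by
    have := hVmem.1
    rwa [Matrix.star_eq_conjTranspose, hct] at this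
  have hV2 : V * Vᵀ = 1 := by
    have := hVmem.2
    rwa [Matrix.star_eq_conjTranspose, hct] at this
  set lam : k → ℝ := hH.eigenvalues with hlam
  have hlam0 : ∀ j, 0 ≤ lam j := fun j => hP.eigenvalues_nonneg j
  have hlam1 : ∀ j, lam j ≤ 1 := by
    intro j
    set v : k → ℝ := ⇑(hH.eigenvectorBasis j) with hvdef
    have hmv : (Dᵀ * D) *ᵥ v = lam j • v := hH.mulVec_eigenvectorBasis j
    have hnorm : (dotProduct v v) = 1 := by
      have h1 : ‖hH.eigenvectorBasis j‖ = 1 := hH.eigenvectorBasis.orthonormal.1 j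
      have h2 : (inner (𝕜 := ℝ) (hH.eigenvectorBasis j) (hH.eigenvectorBasis j)) = 1 := by
        rw [real_inner_self_eq_norm_sq, h1]; norm_num
      rw [← h2]
      simp only [PiLp.inner_apply, RCLike.inner_apply, starRingEnd_apply, star_trivial, dotProduct, hvdef]
    have hpos := hD.dotProduct_mulVec_nonneg v
    rw [Matrix.sub_mulVec, Matrix.one_mulVec, hmv, star_trivial,
      dotProduct_sub, dotProduct_smul, hnorm] at hpos
    simp only [smul_eq_mul, mul_one] at hpos
    linarith
  set E : Matrix k k ℝ := D * V with hE
  have hEE : Eᵀ * E = Matrix.diagonal lam := by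
    have hspec := hH.spectral_theorem
    rw [Unitary.conjStarAlgAut_apply, Matrix.star_eq_conjTranspose, hct, ← hVdef] at hspec
    have hdiag : (Matrix.diagonal (RCLike.ofReal ∘ hH.eigenvalues) : Matrix k k ℝ)
        = Matrix.diagonal lam := by congr 1
    rw [hdiag] at hspec
    rw [hE, Matrix.transpose_mul]
    have h1 : Vᵀ * Dᵀ * (D * V) = Vᵀ * (Dᵀ * D) * V := by noncomm_ring
    rw [h1, hspec]
    have h2 : Vᵀ * (V * Matrix.diagonal lam * Vᵀ) * V
        = (Vᵀ * V) * Matrix.diagonal lam * (Vᵀ * V) := by noncomm_ring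
    rw [h2, hV1, Matrix.one_mul, Matrix.mul_one]
  obtain ⟨U, hU1, hUE⟩ := cs_col_ext E id Function.injective_id lam hEE
  refine ⟨U, V, fun j => Real.sqrt (lam j), hU1, hV1, ?_, ?_⟩
  · intro j
    exact ⟨Real.sqrt_nonneg _, Real.sqrt_le_one.mpr (hlam1 j)⟩
  · have hP0 : (Matrix.of fun i j => if i = id j then Real.sqrt (lam j) else 0)
        = Matrix.diagonal (fun j => Real.sqrt (lam j)) := by
      ext i j
      by_cases hij : i = j
      · subst hij; simp
      · simp [Matrix.diagonal_apply_ne _ hij, hij]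
    rw [hP0] at hUE
    calc D = D * (V * Vᵀ) := by rw [hV2, Matrix.mul_one]
    _ = (D * V) * Vᵀ := by rw [Matrix.mul_assoc]
    _ = U * Matrix.diagonal (fun j => Real.sqrt (lam j)) * Vᵀ := by rw [← hE, hUE]
theorem cs_decomposition (p q : ℕ) (hpq : q ≤ p)
    (Q : Matrix ((Fin q ⊕ Fin (p - q)) ⊕ Fin q) ((Fin q ⊕ Fin (p - q)) ⊕ Fin q) ℝ)
    (hQ : Qᵀ * Q = 1) :
    ∃ (Op Op' : Matrix (Fin q ⊕ Fin (p - q)) (Fin q ⊕ Fin (p - q)) ℝ)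
      (Oq Oq' : Matrix (Fin q) (Fin q) ℝ) (θ : Fin q → ℝ),
      Opᵀ * Op = 1 ∧ Op'ᵀ * Op' = 1 ∧ Oqᵀ * Oq = 1 ∧ Oq'ᵀ * Oq' = 1 ∧
      (∀ l, θ l ∈ Set.Icc 0 (Real.pi / 2)) ∧
      Q = Matrix.fromBlocks Op 0 0 Oq *
          Matrix.fromBlocks
            (Matrix.fromBlocks (Matrix.diagonal fun l => Real.cos (θ l)) 0 0 1)
            (Matrix.of fun i j => match i with
              | Sum.inl i' => if i' = j then Real.sin (θ j) else 0
              | Sum.inr _ => 0)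
            (Matrix.of fun i j => match j with
              | Sum.inl j' => if i = j' then -Real.sin (θ i) else 0
              | Sum.inr _ => 0)
            (Matrix.diagonal fun l => Real.cos (θ l)) *
          Matrix.fromBlocks Op' 0 0 Oq' := by
  classical
  set A := Q.toBlocks₁₁ with hAdef
  set B := Q.toBlocks₁₂ with hBdef
  set C₂ := Q.toBlocks₂₁ with hCdef
  set D := Q.toBlocks₂₂ with hDdef
  have hQb : Matrix.fromBlocks A B C₂ D = Q := Matrix.fromBlocks_toBlocks Q
  have hQ2 : Q * Qᵀ = 1 := mul_eq_one_comm.mp hQ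
  rw [← hQb, Matrix.fromBlocks_transpose, Matrix.fromBlocks_multiply,
    ← Matrix.fromBlocks_one] at hQ hQ2
  rw [Matrix.fromBlocks_inj] at hQ hQ2
  obtain ⟨q11, q12, q21, q22⟩ := hQ
  obtain ⟨r11, r12, r21, r22⟩ := hQ2
  -- SVD of D
  have hsub : (1 : Matrix (Fin q) (Fin q) ℝ) - Dᵀ * D = Bᵀ * B := by
    rw [← q22]; abel
  have hPSD : ((1 : Matrix (Fin q) (Fin q) ℝ) - Dᵀ * D).PosSemidef := by
    rw [hsub]
    have := Matrix.posSemidef_conjTranspose_mul_self B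
    rwa [Matrix.conjTranspose_eq_transpose_of_trivial] at this
  obtain ⟨U₂, V, c, hU₂1, hV1, hc01, hDsvd⟩ := cs_svd D hPSD
  have hU₂2 : U₂ * U₂ᵀ = 1 := mul_eq_one_comm.mp hU₂1
  have hV2 : V * Vᵀ = 1 := mul_eq_one_comm.mp hV1
  have hc1sq : ∀ l, (0:ℝ) ≤ 1 - c l ^ 2 := by
    intro l; nlinarith [(hc01 l).1, (hc01 l).2]
  have hssq : ∀ l, Real.sqrt (1 - c l ^ 2) ^ 2 = 1 - c l ^ 2 := fun l =>
    Real.sq_sqrt (hc1sq l)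
  set θ : Fin q → ℝ := fun l => Real.arccos (c l) with hθdef
  have hθmem : ∀ l, θ l ∈ Set.Icc 0 (Real.pi / 2) := fun l =>
    ⟨Real.arccos_nonneg _, Real.arccos_le_pi_div_two.mpr (hc01 l).1⟩
  have hcos : ∀ l, Real.cos (θ l) = c l := fun l =>
    Real.cos_arccos (by linarith [(hc01 l).1]) (hc01 l).2
  have hsin : ∀ l, Real.sin (θ l) = Real.sqrt (1 - c l ^ 2) := fun l =>
    Real.sin_arccos _
  -- decompose B
  have hDTD : Dᵀ * D = V * (Matrix.diagonal c * Matrix.diagonal c) * Vᵀ := by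
    rw [hDsvd]
    have hdt : (U₂ * Matrix.diagonal c * Vᵀ)ᵀ = V * Matrix.diagonal c * U₂ᵀ := by
      simp [Matrix.transpose_mul, Matrix.diagonal_transpose, Matrix.mul_assoc]
    rw [hdt]
    calc V * Matrix.diagonal c * U₂ᵀ * (U₂ * Matrix.diagonal c * Vᵀ)
        = V * (Matrix.diagonal c * (U₂ᵀ * U₂) * Matrix.diagonal c) * Vᵀ := by noncomm_ring
    _ = V * (Matrix.diagonal c * Matrix.diagonal c) * Vᵀ := by
        rw [hU₂1, Matrix.mul_one]
  have hEE : (B * V)ᵀ * (B * V) = Matrix.diagonal (fun j => 1 - c j ^ 2) := by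
    rw [Matrix.transpose_mul]
    have h1 : Vᵀ * Bᵀ * (B * V) = Vᵀ * (Bᵀ * B) * V := by simp only [Matrix.mul_assoc]
    rw [h1, ← hsub, hDTD, Matrix.mul_sub, Matrix.sub_mul, Matrix.mul_one]
    have h2 : Vᵀ * (V * (Matrix.diagonal c * Matrix.diagonal c) * Vᵀ) * V
        = (Vᵀ * V) * (Matrix.diagonal c * Matrix.diagonal c * (Vᵀ * V)) := by
      simp only [Matrix.mul_assoc]
    rw [h2, hV1, Matrix.one_mul, Matrix.mul_one, Matrix.diagonal_mul_diagonal,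
      ← Matrix.diagonal_one, ← Matrix.diagonal_sub]
    congr 1
    funext j
    ring
  obtain ⟨U₁, hU₁1, hBVE⟩ := cs_col_ext (B * V) Sum.inl Sum.inl_injective _ hEE
  have hU₁2 : U₁ * U₁ᵀ = 1 := mul_eq_one_comm.mp hU₁1
  set P₀ : Matrix (Fin q ⊕ Fin (p - q)) (Fin q) ℝ :=
    Matrix.of (fun i j => if i = Sum.inl j then Real.sqrt (1 - c j ^ 2) else 0) with hP₀def
  have hBV : B * V = U₁ * P₀ := hBVE
  have hP : U₁ᵀ * (B * V) = P₀ := by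
    rw [hBV, ← Matrix.mul_assoc, hU₁1, Matrix.one_mul]
  set F : Matrix (Fin q ⊕ Fin (p - q)) (Fin q ⊕ Fin (p - q)) ℝ := U₁ᵀ * A with hFdef
  set G : Matrix (Fin q) (Fin q ⊕ Fin (p - q)) ℝ := U₂ᵀ * C₂ with hGdef
  have hA : A = U₁ * F := by
    rw [hFdef, ← Matrix.mul_assoc, hU₁2, Matrix.one_mul]
  have hC₂ : C₂ = U₂ * G := by
    rw [hGdef, ← Matrix.mul_assoc, hU₂2, Matrix.one_mul]
  -- matrix-level orthogonality facts
  have hPPt : P₀ * P₀ᵀ =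
      Matrix.fromBlocks (Matrix.diagonal fun j => 1 - c j ^ 2) 0 0 0 := by
    ext i i'
    rw [Matrix.mul_apply]
    simp only [Matrix.transpose_apply, hP₀def, Matrix.of_apply]
    cases i with
    | inl a =>
      cases i' with
      | inl b =>
        rw [Matrix.fromBlocks_apply₁₁]
        simp only [Sum.inl.injEq, ite_mul, zero_mul, mul_ite, mul_zero]
        rw [Finset.sum_ite_eq]
        by_cases hab : a = b
        · subst hab
          simp [Real.mul_self_sqrt (hc1sq a)]
        · simp [hab, Matrix.diagonal_apply_ne _ hab, Ne.symm hab]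
      | inr k =>
        simp
    | inr k =>
      cases i' <;> simp
  have hBB : B * Bᵀ = U₁ * (P₀ * P₀ᵀ) * U₁ᵀ := by
    calc B * Bᵀ = B * (V * Vᵀ) * Bᵀ := by rw [hV2, Matrix.mul_one]
    _ = (B * V) * (B * V)ᵀ := by
        rw [Matrix.transpose_mul]; simp only [Matrix.mul_assoc]
    _ = (U₁ * P₀) * (U₁ * P₀)ᵀ := by rw [hBV]
    _ = U₁ * (P₀ * P₀ᵀ) * U₁ᵀ := by
        rw [Matrix.transpose_mul]; simp only [Matrix.mul_assoc]
  have hFF' : F * Fᵀ = 1 - P₀ * P₀ᵀ := by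
    have hAA : A * Aᵀ = 1 - B * Bᵀ := by rw [← r11]; abel
    calc F * Fᵀ = U₁ᵀ * (A * Aᵀ) * U₁ := by
          rw [hFdef, Matrix.transpose_mul, Matrix.transpose_transpose]
          simp only [Matrix.mul_assoc]
    _ = U₁ᵀ * (1 - U₁ * (P₀ * P₀ᵀ) * U₁ᵀ) * U₁ := by rw [hAA, hBB]
    _ = 1 - P₀ * P₀ᵀ := by
          rw [Matrix.mul_sub, Matrix.sub_mul, Matrix.mul_one, hU₁1,
            cs_sandwich U₁ (P₀ * P₀ᵀ) hU₁1]
  have hFF : F * Fᵀ = Matrix.fromBlocks (Matrix.diagonal fun j => c j ^ 2) 0 0 1 := by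
    rw [hFF', hPPt]
    ext i i'
    cases i with
    | inl a =>
      cases i' with
      | inl b =>
        by_cases hab : a = b
        · subst hab
          simp [Matrix.sub_apply, Matrix.one_apply]
        · simp [Matrix.sub_apply, Matrix.one_apply, hab, Sum.inl.injEq,
            Matrix.diagonal_apply_ne _ hab]
      | inr k => simp [Matrix.sub_apply, Matrix.one_apply]
    | inr k =>
      cases i' with
      | inl b => simp [Matrix.sub_apply, Matrix.one_apply]
      | inr k' => simp [Matrix.sub_apply, Matrix.one_apply]
  have hDt : Dᵀ = V * Matrix.diagonal c * U₂ᵀ := by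
    rw [hDsvd]
    simp [Matrix.transpose_mul, Matrix.diagonal_transpose, Matrix.mul_assoc]
  have hFG : F * Gᵀ = -(P₀ * Matrix.diagonal c) := by
    have hACt : A * C₂ᵀ = -(B * Dᵀ) := eq_neg_of_add_eq_zero_left r12
    have hBDt : B * Dᵀ = U₁ * (P₀ * Matrix.diagonal c) * U₂ᵀ := by
      rw [hDt, ← Matrix.mul_assoc, ← Matrix.mul_assoc, hBV]
      simp only [Matrix.mul_assoc]
    calc F * Gᵀ = U₁ᵀ * (A * C₂ᵀ) * U₂ := by
          rw [hFdef, hGdef, Matrix.transpose_mul, Matrix.transpose_transpose]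
          simp only [Matrix.mul_assoc]
    _ = -(U₁ᵀ * (U₁ * ((P₀ * Matrix.diagonal c) * (U₂ᵀ * U₂)))) := by
          rw [hACt, hBDt]
          simp only [Matrix.mul_neg, Matrix.neg_mul, Matrix.mul_assoc]
    _ = -(P₀ * Matrix.diagonal c) := by
          rw [hU₂1, Matrix.mul_one, ← Matrix.mul_assoc, hU₁1, Matrix.one_mul]
  have hGG : G * Gᵀ = Matrix.diagonal (fun l => 1 - c l ^ 2) := by
    have hDD : D * Dᵀ = U₂ * (Matrix.diagonal c * Matrix.diagonal c) * U₂ᵀ := by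
      rw [hDt, hDsvd]
      calc U₂ * Matrix.diagonal c * Vᵀ * (V * Matrix.diagonal c * U₂ᵀ)
          = U₂ * (Matrix.diagonal c * ((Vᵀ * V) * (Matrix.diagonal c * U₂ᵀ))) := by
            simp only [Matrix.mul_assoc]
      _ = U₂ * (Matrix.diagonal c * Matrix.diagonal c) * U₂ᵀ := by
            rw [hV1, Matrix.one_mul]; simp only [Matrix.mul_assoc]
    have hCC : C₂ * C₂ᵀ = 1 - D * Dᵀ := by rw [← r22]; abel
    calc G * Gᵀ = U₂ᵀ * (C₂ * C₂ᵀ) * U₂ := by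
          rw [hGdef, Matrix.transpose_mul, Matrix.transpose_transpose]
          simp only [Matrix.mul_assoc]
    _ = 1 - Matrix.diagonal c * Matrix.diagonal c := by
          rw [hCC, hDD, Matrix.mul_sub, Matrix.sub_mul, Matrix.mul_one, hU₂1,
            cs_sandwich U₂ (Matrix.diagonal c * Matrix.diagonal c) hU₂1]
    _ = Matrix.diagonal (fun l => 1 - c l ^ 2) := by
          rw [Matrix.diagonal_mul_diagonal, ← Matrix.diagonal_one, ← Matrix.diagonal_sub]
          congr 1; funext j; ring
  have hf4m : P₀ᵀ * F + Matrix.diagonal c * G = 0 := by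
    have hP₀t : P₀ᵀ = Vᵀ * Bᵀ * U₁ := by
      rw [← hP, Matrix.transpose_mul, Matrix.transpose_mul, Matrix.transpose_transpose]
    have hdc : Matrix.diagonal c = Vᵀ * Dᵀ * U₂ := by
      rw [hDt]
      calc Matrix.diagonal c = (Vᵀ * V) * (Matrix.diagonal c * (U₂ᵀ * U₂)) := by
            rw [hV1, hU₂1, Matrix.one_mul, Matrix.mul_one]
      _ = Vᵀ * (V * Matrix.diagonal c * U₂ᵀ) * U₂ := by simp only [Matrix.mul_assoc]
    have h1 : P₀ᵀ * F = Vᵀ * (Bᵀ * A) := by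
      rw [hP₀t, hFdef]
      calc Vᵀ * Bᵀ * U₁ * (U₁ᵀ * A) = Vᵀ * (Bᵀ * ((U₁ * U₁ᵀ) * A)) := by
            simp only [Matrix.mul_assoc]
      _ = Vᵀ * (Bᵀ * A) := by rw [hU₁2, Matrix.one_mul]
    have h2 : Matrix.diagonal c * G = Vᵀ * (Dᵀ * C₂) := by
      rw [hdc, hGdef]
      calc Vᵀ * Dᵀ * U₂ * (U₂ᵀ * C₂) = Vᵀ * (Dᵀ * ((U₂ * U₂ᵀ) * C₂)) := by
            simp only [Matrix.mul_assoc]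
      _ = Vᵀ * (Dᵀ * C₂) := by rw [hU₂2, Matrix.one_mul]
    rw [h1, h2, ← Matrix.mul_add, q21, Matrix.mul_zero]
  have hf4 : ∀ l j, Real.sqrt (1 - c l ^ 2) * F (Sum.inl l) j + c l * G l j = 0 := by
    intro l j
    have h := congrFun (congrFun hf4m l) j
    rw [Matrix.add_apply, Matrix.zero_apply, Matrix.mul_apply, Matrix.diagonal_mul] at h
    simp only [Matrix.transpose_apply, hP₀def, Matrix.of_apply, ite_mul, zero_mul,
      Finset.sum_ite_eq'] at h
    simpa using h
  -- entrywise forms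
  have eFF : ∀ i i', ∑ j, F i j * F i' j
      = Matrix.fromBlocks (Matrix.diagonal fun j => c j ^ 2) 0 0
          (1 : Matrix (Fin (p - q)) (Fin (p - q)) ℝ) i i' := by
    intro i i'
    rw [← hFF, Matrix.mul_apply]
    simp [Matrix.transpose_apply]
  have eFG : ∀ i l, ∑ j, F i j * G l j = -(P₀ i l * c l) := by
    intro i l
    have h := congrFun (congrFun hFG i) l
    rw [Matrix.mul_apply] at h
    simpa [Matrix.transpose_apply, Matrix.mul_diagonal] using h
  have eGG : ∀ l l', ∑ j, G l j * G l' j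
      = Matrix.diagonal (fun l => 1 - c l ^ 2) l l' := by
    intro l l'
    rw [← hGG, Matrix.mul_apply]
    simp [Matrix.transpose_apply]
  have hFrow0 : ∀ l, c l = 0 → ∀ j, F (Sum.inl l) j = 0 := by
    intro l hl j
    have h := eFF (Sum.inl l) (Sum.inl l)
    rw [Matrix.fromBlocks_apply₁₁, Matrix.diagonal_apply_eq, hl] at h
    have h0 : ∑ j, F (Sum.inl l) j * F (Sum.inl l) j = 0 := by rw [h]; ring
    have := (Finset.sum_eq_zero_iff_of_nonneg
      (fun j _ => mul_self_nonneg (F (Sum.inl l) j))).mp h0 j (Finset.mem_univ j)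
    exact mul_self_eq_zero.mp this
  -- the right orthogonal factor
  set Op' : Matrix (Fin q ⊕ Fin (p - q)) (Fin q ⊕ Fin (p - q)) ℝ :=
    Matrix.of (fun i j => match i with
      | Sum.inl l => if c l = 0 then -(G l j) else F (Sum.inl l) j / c l
      | Sum.inr k => F (Sum.inr k) j) with hOp'def
  have hO1 : Op' * Op'ᵀ = 1 := by
    ext i i'
    rw [Matrix.mul_apply, Matrix.one_apply]
    simp only [Matrix.transpose_apply, hOp'def, Matrix.of_apply]
    cases i with
    | inl a =>
      cases i' with
      | inl b =>
        by_cases ha : c a = 0 <;> by_cases hb : c b = 0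
        · simp only [if_pos ha, if_pos hb, neg_mul_neg]
          rw [eGG a b]
          by_cases hab : a = b
          · subst hab
            simp [Matrix.diagonal_apply_eq, ha]
          · simp [Matrix.diagonal_apply_ne _ hab, hab]
        · have hab : a ≠ b := fun h => hb (h ▸ ha)
          simp only [if_pos ha, if_neg hb]
          have h1 : ∀ j, -G a j * (F (Sum.inl b) j / c b)
              = -(F (Sum.inl b) j * G a j) / c b := by intro j; ring
          simp only [h1]
          rw [← Finset.sum_div, Finset.sum_neg_distrib, eFG (Sum.inl b) a]
          simp [ha, hab]
        · have hab : a ≠ b := fun h => ha (h ▸ hb)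
          simp only [if_neg ha, if_pos hb]
          have h1 : ∀ j, F (Sum.inl a) j / c a * -G b j
              = -(F (Sum.inl a) j * G b j) / c a := by intro j; ring
          simp only [h1]
          rw [← Finset.sum_div, Finset.sum_neg_distrib, eFG (Sum.inl a) b]
          simp [hb, hab]
        · simp only [if_neg ha, if_neg hb]
          have h1 : ∀ j, F (Sum.inl a) j / c a * (F (Sum.inl b) j / c b)
              = F (Sum.inl a) j * F (Sum.inl b) j / (c a * c b) := by
            intro j; ring
          simp only [h1]
          rw [← Finset.sum_div, eFF (Sum.inl a) (Sum.inl b), Matrix.fromBlocks_apply₁₁]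
          by_cases hab : a = b
          · subst hab
            rw [Matrix.diagonal_apply_eq]
            simp only [Sum.inl.injEq, if_pos rfl, ite_true]
            field_simp
          · rw [Matrix.diagonal_apply_ne _ hab]
            simp [hab]
      | inr k =>
        by_cases ha : c a = 0
        · simp only [if_pos ha]
          have h1 : ∀ j, -G a j * F (Sum.inr k) j = -(F (Sum.inr k) j * G a j) := by
            intro j; ring
          simp only [h1]
          rw [Finset.sum_neg_distrib, eFG (Sum.inr k) a]
          simp [hP₀def]
        · simp only [if_neg ha]
          have h1 : ∀ j, F (Sum.inl a) j / c a * F (Sum.inr k) j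
              = F (Sum.inl a) j * F (Sum.inr k) j / c a := by intro j; ring
          simp only [h1]
          rw [← Finset.sum_div, eFF (Sum.inl a) (Sum.inr k), Matrix.fromBlocks_apply₁₂]
          simp
    | inr k =>
      cases i' with
      | inl b =>
        by_cases hb : c b = 0
        · simp only [if_pos hb]
          have h1 : ∀ j, F (Sum.inr k) j * -G b j = -(F (Sum.inr k) j * G b j) := by
            intro j; ring
          simp only [h1]
          rw [Finset.sum_neg_distrib, eFG (Sum.inr k) b]
          simp [hP₀def]
        · simp only [if_neg hb]
          have h1 : ∀ j, F (Sum.inr k) j * (F (Sum.inl b) j / c b)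
              = F (Sum.inr k) j * F (Sum.inl b) j / c b := by intro j; ring
          simp only [h1]
          rw [← Finset.sum_div, eFF (Sum.inr k) (Sum.inl b), Matrix.fromBlocks_apply₂₁]
          simp
      | inr k' =>
        rw [eFF (Sum.inr k) (Sum.inr k'), Matrix.fromBlocks_apply₂₂]
        simp [Matrix.one_apply]
  set Mbl : Matrix (Fin q) (Fin q ⊕ Fin (p - q)) ℝ :=
    Matrix.of (fun l m => if m = Sum.inl l then -(Real.sqrt (1 - c l ^ 2)) else 0) with hMbldef
  have hMtl : Matrix.diagonal (Sum.elim c fun _ => (1:ℝ)) * Op' = F := by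
    ext i j
    rw [Matrix.diagonal_mul]
    cases i with
    | inl l =>
      simp only [Sum.elim_inl, hOp'def, Matrix.of_apply]
      by_cases hl : c l = 0
      · simp [hl, hFrow0 l hl j]
      · rw [if_neg hl, mul_comm, div_mul_cancel₀ _ hl]
    | inr k =>
      simp [hOp'def]
  have hMbl : Mbl * Op' = G := by
    ext l j
    rw [Matrix.mul_apply]
    simp only [hMbldef, Matrix.of_apply, ite_mul, zero_mul, neg_mul, Finset.sum_ite_eq',
      Finset.mem_univ, if_pos]
    simp only [hOp'def, Matrix.of_apply]
    by_cases hl : c l = 0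
    · rw [if_pos hl, hl]
      norm_num
    · rw [if_neg hl]
      have h := hf4 l j
      field_simp
      linarith
  -- assemble
  refine ⟨U₁, Op', U₂, Vᵀ, θ, hU₁1, mul_eq_one_comm.mp hO1, hU₂1,
    by rw [Matrix.transpose_transpose]; exact hV2, hθmem, ?_⟩
  have hM11 : Matrix.fromBlocks (Matrix.diagonal fun l => Real.cos (θ l)) 0 0
      (1 : Matrix (Fin (p - q)) (Fin (p - q)) ℝ)
      = Matrix.diagonal (Sum.elim c fun _ => (1:ℝ)) := by
    simp only [hcos]
    rw [← Matrix.diagonal_one, Matrix.fromBlocks_diagonal]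
  have hM12 : (Matrix.of fun i j => match i with
      | Sum.inl i' => if i' = j then Real.sin (θ j) else 0
      | Sum.inr _ => (0:ℝ)) = P₀ := by
    ext i j
    cases i with
    | inl i' => simp [hP₀def, hsin, Sum.inl.injEq]
    | inr k => simp [hP₀def]
  have hM21 : (Matrix.of fun i j => match j with
      | Sum.inl j' => if i = j' then -Real.sin (θ i) else 0
      | Sum.inr _ => (0:ℝ)) = Mbl := by
    ext i j
    cases j with
    | inl j' => simp [hMbldef, hsin, Sum.inl.injEq, eq_comm]
    | inr k => simp [hMbldef]
  have hM22 : (Matrix.diagonal fun l => Real.cos (θ l)) = Matrix.diagonal c := by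
    simp only [hcos]
  rw [hM12, hM21, hM11, hM22, ← hQb, Matrix.fromBlocks_multiply, Matrix.fromBlocks_multiply]
  simp only [Matrix.zero_mul, Matrix.mul_zero, add_zero, zero_add]
  rw [Matrix.fromBlocks_inj]
  refine ⟨?_, ?_, ?_, ?_⟩
  · rw [Matrix.mul_assoc, hMtl, hA]
  · rw [← hBV]
    calc B = B * (V * Vᵀ) := by rw [hV2, Matrix.mul_one]
    _ = B * V * Vᵀ := by rw [Matrix.mul_assoc]
  · rw [Matrix.mul_assoc, hMbl, hC₂]
  · exact hDsvd
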